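/- Let S₁ be a signed graph with adjacency matrix A₁ (n₁×n₁) having exactly t₁ distinct (real) eigenvalues, and let S₂ be a net regular signed graph (all row sums of A₂ equal to some real r₂) with adjacency matrix A₂ (n₂×n₂) having exactly t₂ distinct eigenvalues. Then the adjacency matrix A of S₁ ⋆ₛ S₂ has at most 2t₁ + t₂ distinct eigenvalues; that is, the cardinality of the real spectrum of A is at most 2·(cardinality of the real spectrum of A₁) + (cardinality of the real spectrum of A₂). -/

import Mathlib

open Matrix BigOperators Kronecker

/-- A signed graph on vertex set `V` is represented by its adjacency matrix: a real symmetric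
matrix with zero diagonal and all entries in `{-1, 0, 1}`. -/
def IsSignedAdj {V : Type*} (A : Matrix V V ℝ) : Prop :=
  A.IsHermitian ∧ (∀ i, A i i = 0) ∧ ∀ i j, A i j = -1 ∨ A i j = 0 ∨ A i j = 1

/-- The adjacency matrix of the s-neighbourhood corona `S₁ ⋆ₛ S₂`:
the block matrix `[[A₁, jᵀ ⊗ A₁], [(jᵀ ⊗ A₁)ᵀ, A₂ ⊗ I]]`, indexed by `Fin n₁ ⊕ (V × Fin n₁)`. -/
def coronaAdj {n₁ : ℕ} {V : Type*} [DecidableEq V]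
    (A₁ : Matrix (Fin n₁) (Fin n₁) ℝ) (A₂ : Matrix V V ℝ) :
    Matrix (Fin n₁ ⊕ V × Fin n₁) (Fin n₁ ⊕ V × Fin n₁) ℝ :=
  Matrix.fromBlocks A₁ (Matrix.of fun i p => A₁ i p.2) (Matrix.of fun p j => A₁ p.2 j)
    (A₂ ⊗ₖ (1 : Matrix (Fin n₁) (Fin n₁) ℝ))

/-- Spectrum membership for a real matrix is existence of an eigenvector. -/
lemma mem_spec_iff_eigenvec {m : Type*} [Fintype m] [DecidableEq m]
    (M : Matrix m m ℝ) (lam : ℝ) :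
    lam ∈ spectrum ℝ M ↔ ∃ v, v ≠ 0 ∧ M *ᵥ v = lam • v := by
  rw [spectrum.mem_iff, Matrix.isUnit_iff_isUnit_det, isUnit_iff_ne_zero, not_not,
    ← Matrix.exists_mulVec_eq_zero_iff]
  constructor
  · rintro ⟨v, hv, h⟩
    refine ⟨v, hv, ?_⟩
    simp only [Algebra.algebraMap_eq_smul_one, Matrix.sub_mulVec, Matrix.smul_mulVec,
      Matrix.one_mulVec, sub_eq_zero] at h
    exact h.symm
  · rintro ⟨v, hv, h⟩
    refine ⟨v, hv, ?_⟩
    simp only [Algebra.algebraMap_eq_smul_one, Matrix.sub_mulVec, Matrix.smul_mulVec,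
      Matrix.one_mulVec, sub_eq_zero]
    exact h.symm

/-- Real solutions of a monic quadratic are among two explicit values. -/
lemma quad_subset (b c : ℝ) :
    {lam : ℝ | lam ^ 2 + b * lam + c = 0} ⊆
      {-b / 2 + Real.sqrt (b ^ 2 / 4 - c), -b / 2 - Real.sqrt (b ^ 2 / 4 - c)} := by
  intro lam hlam
  simp only [Set.mem_setOf_eq] at hlam
  have hd : (lam + b / 2) ^ 2 = b ^ 2 / 4 - c := by linear_combination hlam
  have hnn : 0 ≤ b ^ 2 / 4 - c := hd ▸ sq_nonneg _
  have h2 : (lam + b / 2) ^ 2 = (Real.sqrt (b ^ 2 / 4 - c)) ^ 2 := by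
    rw [Real.sq_sqrt hnn, hd]
  have h3 := abs_eq_abs.mp ((sq_eq_sq_iff_abs_eq_abs _ _).mp h2)
  simp only [Set.mem_insert_iff, Set.mem_singleton_iff]
  rcases h3 with h | h
  · left; linarith
  · right; linarith

lemma quad_finite (b c : ℝ) : {lam : ℝ | lam ^ 2 + b * lam + c = 0}.Finite :=
  Set.Finite.subset ((Set.finite_singleton _).insert _) (quad_subset b c)

lemma quad_ncard (b c : ℝ) : {lam : ℝ | lam ^ 2 + b * lam + c = 0}.ncard ≤ 2 := by
  refine le_trans (Set.ncard_le_ncard (quad_subset b c)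
    ((Set.finite_singleton _).insert _)) ?_
  refine le_trans (Set.ncard_insert_le _ _) ?_
  simp

lemma ncard_biUnion_le {α β : Type*} {s : Set α} (hs : s.Finite) (f : α → Set β) {m : ℕ}
    (hf : ∀ a, (f a).ncard ≤ m) :
    (⋃ a ∈ s, f a).ncard ≤ s.ncard * m := by
  refine Set.Finite.induction_on (motive := fun s _ => (⋃ a ∈ s, f a).ncard ≤ s.ncard * m) s hs
    (by simp) ?_
  intro a t ha htfin ih
  · rw [Set.biUnion_insert, Set.ncard_insert_of_notMem ha htfin, add_mul, one_mul]
    calc (f a ∪ ⋃ x ∈ t, f x).ncard ≤ (f a).ncard + (⋃ x ∈ t, f x).ncard :=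
          Set.ncard_union_le _ _
      _ ≤ m + t.ncard * m := add_le_add (hf a) ih
      _ = t.ncard * m + m := by ring

/-- If a quadratic expression in a hermitian real matrix is singular, then some real
eigenvalue of the matrix satisfies the quadratic. -/
lemma herm_quad {m : Type*} [Fintype m] [DecidableEq m] {B : Matrix m m ℝ}
    (hB : B.IsHermitian) (a b c : ℝ)
    (hdet : (a • (B * B) + b • B + c • (1 : Matrix m m ℝ)).det = 0) :
    ∃ μ ∈ spectrum ℝ B, a * μ ^ 2 + b * μ + c = 0 := by
  set U : Matrix m m ℝ := (hB.eigenvectorUnitary : Matrix m m ℝ) with hUdef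
  set V : Matrix m m ℝ := star U with hVdef
  have hUV : U * V = 1 := (Matrix.mem_unitaryGroup_iff).mp hB.eigenvectorUnitary.2
  have hVU : V * U = 1 := (Matrix.mem_unitaryGroup_iff').mp hB.eigenvectorUnitary.2
  set D : Matrix m m ℝ := Matrix.diagonal hB.eigenvalues with hDdef
  have hB' : B = U * D * V := by
    have := hB.spectral_theorem
    simpa [RCLike.ofReal_real_eq_id, hUdef, hVdef, hDdef] using this
  have h1 : U * D * V * (U * D * V) = U * (D * D) * V := by
    calc U * D * V * (U * D * V) = U * D * (V * U) * (D * V) := by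
          simp only [mul_assoc]
      _ = U * (D * D) * V := by rw [hVU, mul_one]; simp only [mul_assoc]
  have key : a • (B * B) + b • B + c • (1 : Matrix m m ℝ) =
      U * Matrix.diagonal (fun i => a * hB.eigenvalues i ^ 2 + b * hB.eigenvalues i + c) * V := by
    have hdiag : Matrix.diagonal (fun i => a * hB.eigenvalues i ^ 2 + b * hB.eigenvalues i + c)
        = a • (D * D) + b • D + c • (1 : Matrix m m ℝ) := by
      rw [hDdef, Matrix.diagonal_mul_diagonal]
      ext i j
      by_cases h : i = j
      · subst h
        simp only [Matrix.diagonal_apply_eq, Matrix.add_apply, Matrix.smul_apply,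
          Matrix.one_apply_eq, smul_eq_mul]
        ring
      · simp [Matrix.diagonal_apply_ne _ h, Matrix.one_apply_ne h]
    rw [hdiag, hB', h1]
    have hone : (1 : Matrix m m ℝ) = U * (1 : Matrix m m ℝ) * V := by
      rw [Matrix.mul_one, hUV]
    calc a • (U * (D * D) * V) + b • (U * D * V) + c • (1 : Matrix m m ℝ)
        = a • (U * (D * D) * V) + b • (U * D * V) + c • (U * 1 * V) := by rw [← hone]
      _ = U * (a • (D * D) + b • D + c • (1 : Matrix m m ℝ)) * V := by
          simp only [Matrix.mul_add, Matrix.add_mul, Matrix.mul_smul, Matrix.smul_mul]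
  rw [key, Matrix.det_mul_right_comm, hUV, one_mul, Matrix.det_diagonal] at hdet
  obtain ⟨i, _, hi⟩ := Finset.prod_eq_zero_iff.mp hdet
  exact ⟨hB.eigenvalues i, hB.eigenvalues_mem_spectrum_real i, hi⟩

/-- If the signed graph `S₁` has exactly `t₁` distinct (real) eigenvalues and the net regular
signed graph `S₂` has exactly `t₂` distinct eigenvalues, then the adjacency matrix of
`S₁ ⋆ₛ S₂` has at most `2t₁ + t₂` distinct eigenvalues. -/
theorem corona_adj_card_spectrum {n₁ n₂ t₁ t₂ : ℕ}
    (A₁ : Matrix (Fin n₁) (Fin n₁) ℝ) (A₂ : Matrix (Fin n₂) (Fin n₂) ℝ)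
    (h₁ : IsSignedAdj A₁) (h₂ : IsSignedAdj A₂)
    (r₂ : ℝ) (hreg : ∀ i, ∑ j, A₂ i j = r₂)
    (ht₁ : (spectrum ℝ A₁).ncard = t₁) (ht₂ : (spectrum ℝ A₂).ncard = t₂) :
    (spectrum ℝ (coronaAdj A₁ A₂)).ncard ≤ 2 * t₁ + t₂ := by
  classical
  have hfin1 : (spectrum ℝ A₁).Finite := Matrix.finite_spectrum A₁
  have hfin2 : (spectrum ℝ A₂).Finite := Matrix.finite_spectrum A₂
  have hTfin : (⋃ μ ∈ spectrum ℝ A₁,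
      {lam : ℝ | lam ^ 2 + (-(μ + r₂)) * lam + (μ * r₂ - (n₂ : ℝ) * μ ^ 2) = 0}).Finite :=
    Set.Finite.biUnion hfin1 (fun μ _ => quad_finite _ _)
  have hSfin : (spectrum ℝ A₂ ∪ ⋃ μ ∈ spectrum ℝ A₁,
      {lam : ℝ | lam ^ 2 + (-(μ + r₂)) * lam + (μ * r₂ - (n₂ : ℝ) * μ ^ 2) = 0}).Finite :=
    hfin2.union hTfin
  -- spectral containment
  have hsub : spectrum ℝ (coronaAdj A₁ A₂) ⊆ spectrum ℝ A₂ ∪ ⋃ μ ∈ spectrum ℝ A₁,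
      {lam : ℝ | lam ^ 2 + (-(μ + r₂)) * lam + (μ * r₂ - (n₂ : ℝ) * μ ^ 2) = 0} := by
    intro lam hlam
    obtain ⟨v, hv, hev⟩ := (mem_spec_iff_eigenvec _ lam).mp hlam
    have hE1 : ∀ i, (∑ j, A₁ i j * v (Sum.inl j)) +
        ∑ k, ∑ j, A₁ i j * v (Sum.inr (k, j)) = lam * v (Sum.inl i) := by
      intro i
      have := congrFun hev (Sum.inl i)
      simpa [coronaAdj, Matrix.mulVec, dotProduct, Fintype.sum_sum_type,
        Fintype.sum_prod_type] using this
    have hE2 : ∀ k i, (∑ j, A₁ i j * v (Sum.inl j)) +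
        ∑ l, A₂ k l * v (Sum.inr (l, i)) = lam * v (Sum.inr (k, i)) := by
      intro k i
      have := congrFun hev (Sum.inr (k, i))
      simpa [coronaAdj, Matrix.mulVec, dotProduct, Fintype.sum_sum_type,
        Fintype.sum_prod_type, Matrix.one_apply, mul_ite, ite_mul, Finset.sum_ite_eq,
        Finset.sum_ite_eq'] using this
    rw [Set.mem_union]
    by_cases hx : ∀ i, v (Sum.inl i) = 0
    · -- eigenvector lives in the second block: lam is an eigenvalue of A₂
      left
      obtain ⟨p, hp⟩ := Function.ne_iff.mp hv
      obtain ⟨k₀, i₀, hki⟩ : ∃ k₀ i₀, v (Sum.inr (k₀, i₀)) ≠ 0 := by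
        rcases p with i | ⟨k, i⟩
        · exact absurd (hx i) hp
        · exact ⟨k, i, hp⟩
      refine (mem_spec_iff_eigenvec A₂ lam).mpr ⟨fun k => v (Sum.inr (k, i₀)), ?_, ?_⟩
      · intro h0
        exact hki (congrFun h0 k₀)
      · funext k
        have h := hE2 k i₀
        have hz : (∑ j, A₁ i₀ j * v (Sum.inl j)) = 0 := by simp [hx]
        rw [hz, zero_add] at h
        simpa [Matrix.mulVec, dotProduct] using h
    · -- eigenvector has a nonzero first block: lam satisfies a quadratic over spec A₁
      right
      push_neg at hx
      set xv : Fin n₁ → ℝ := fun i => v (Sum.inl i) with hxv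
      set sv : Fin n₁ → ℝ := fun i => ∑ k, v (Sum.inr (k, i)) with hsv
      have hxv0 : xv ≠ 0 := by
        obtain ⟨i, hi⟩ := hx
        intro h0
        exact hi (congrFun h0 i)
      have hsymm : ∀ k l, A₂ k l = A₂ l k := by
        intro k l
        conv_lhs => rw [← h₂.1]
        simp [Matrix.conjTranspose_apply]
      have hcol : ∀ l, (∑ k, A₂ k l) = r₂ := by
        intro l
        rw [← hreg l]
        exact Finset.sum_congr rfl fun k _ => hsymm k l
      have hAx : ∀ i, (A₁ *ᵥ xv) i = ∑ j, A₁ i j * v (Sum.inl j) := fun i => rfl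
      have h1 : A₁ *ᵥ sv = lam • xv - A₁ *ᵥ xv := by
        funext i
        have hswap : (A₁ *ᵥ sv) i = ∑ k, ∑ j, A₁ i j * v (Sum.inr (k, j)) := by
          calc (A₁ *ᵥ sv) i = ∑ j, A₁ i j * ∑ k, v (Sum.inr (k, j)) := rfl
            _ = ∑ j, ∑ k, A₁ i j * v (Sum.inr (k, j)) := by
                simp [Finset.mul_sum]
            _ = ∑ k, ∑ j, A₁ i j * v (Sum.inr (k, j)) := Finset.sum_comm
        have hE := hE1 i
        simp only [Pi.sub_apply, Pi.smul_apply, smul_eq_mul, hswap, hAx]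
        simp only [hxv]
        linarith
      have h2 : (lam - r₂) • sv = (n₂ : ℝ) • (A₁ *ᵥ xv) := by
        funext i
        have hsumk : ∑ k : Fin n₂, ((∑ j, A₁ i j * v (Sum.inl j)) +
            ∑ l, A₂ k l * v (Sum.inr (l, i))) = lam * sv i := by
          calc ∑ k : Fin n₂, ((∑ j, A₁ i j * v (Sum.inl j)) +
                ∑ l, A₂ k l * v (Sum.inr (l, i)))
              = ∑ k : Fin n₂, lam * v (Sum.inr (k, i)) :=
                Finset.sum_congr rfl fun k _ => hE2 k i
            _ = lam * sv i := by rw [hsv]; simp [Finset.mul_sum]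
        have hcolsum : ∑ k : Fin n₂, ∑ l, A₂ k l * v (Sum.inr (l, i)) = r₂ * sv i := by
          calc ∑ k : Fin n₂, ∑ l, A₂ k l * v (Sum.inr (l, i))
              = ∑ l, ∑ k : Fin n₂, A₂ k l * v (Sum.inr (l, i)) := Finset.sum_comm
            _ = ∑ l, (∑ k : Fin n₂, A₂ k l) * v (Sum.inr (l, i)) := by
                simp [Finset.sum_mul]
            _ = ∑ l, r₂ * v (Sum.inr (l, i)) :=
                Finset.sum_congr rfl fun l _ => by rw [hcol l]
            _ = r₂ * sv i := by rw [hsv]; simp [Finset.mul_sum]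
        have hexpand : ∑ k : Fin n₂, ((∑ j, A₁ i j * v (Sum.inl j)) +
            ∑ l, A₂ k l * v (Sum.inr (l, i))) =
            (n₂ : ℝ) * (∑ j, A₁ i j * v (Sum.inl j)) + r₂ * sv i := by
          rw [Finset.sum_add_distrib, hcolsum, Finset.sum_const, Finset.card_univ,
            Fintype.card_fin, nsmul_eq_mul]
        have hfinal : (n₂ : ℝ) * (∑ j, A₁ i j * v (Sum.inl j)) + r₂ * sv i = lam * sv i := by
          rw [← hexpand]; exact hsumk
        simp only [Pi.smul_apply, smul_eq_mul, hAx]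
        linarith
      have h3 : (n₂ : ℝ) • (A₁ *ᵥ (A₁ *ᵥ xv)) = (lam - r₂) • (lam • xv - A₁ *ᵥ xv) := by
        calc (n₂ : ℝ) • (A₁ *ᵥ (A₁ *ᵥ xv)) = A₁ *ᵥ ((n₂ : ℝ) • (A₁ *ᵥ xv)) := by
              rw [Matrix.mulVec_smul]
          _ = A₁ *ᵥ ((lam - r₂) • sv) := by rw [h2]
          _ = (lam - r₂) • (A₁ *ᵥ sv) := by rw [Matrix.mulVec_smul]
          _ = (lam - r₂) • (lam • xv - A₁ *ᵥ xv) := by rw [h1]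
      have hFx : ((n₂ : ℝ) • (A₁ * A₁) + (lam - r₂) • A₁ +
          (-(lam * (lam - r₂))) • (1 : Matrix (Fin n₁) (Fin n₁) ℝ)) *ᵥ xv = 0 := by
        simp only [Matrix.add_mulVec, Matrix.smul_mulVec, Matrix.one_mulVec,
          ← Matrix.mulVec_mulVec]
        rw [h3]
        funext i
        simp only [Pi.add_apply, Pi.smul_apply, Pi.sub_apply, Pi.zero_apply, smul_eq_mul]
        ring
      have hdet : ((n₂ : ℝ) • (A₁ * A₁) + (lam - r₂) • A₁ +
          (-(lam * (lam - r₂))) • (1 : Matrix (Fin n₁) (Fin n₁) ℝ)).det = 0 :=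
        Matrix.exists_mulVec_eq_zero_iff.mp ⟨xv, hxv0, hFx⟩
      obtain ⟨μ, hμmem, hμ⟩ := herm_quad h₁.1 _ _ _ hdet
      refine Set.mem_biUnion hμmem ?_
      show lam ^ 2 + (-(μ + r₂)) * lam + (μ * r₂ - (n₂ : ℝ) * μ ^ 2) = 0
      linear_combination -hμ
  -- cardinality bound
  calc (spectrum ℝ (coronaAdj A₁ A₂)).ncard
      ≤ (spectrum ℝ A₂ ∪ ⋃ μ ∈ spectrum ℝ A₁,
          {lam : ℝ | lam ^ 2 + (-(μ + r₂)) * lam + (μ * r₂ - (n₂ : ℝ) * μ ^ 2) = 0}).ncard :=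
        Set.ncard_le_ncard hsub hSfin
    _ ≤ (spectrum ℝ A₂).ncard + (⋃ μ ∈ spectrum ℝ A₁,
          {lam : ℝ | lam ^ 2 + (-(μ + r₂)) * lam + (μ * r₂ - (n₂ : ℝ) * μ ^ 2) = 0}).ncard :=
        Set.ncard_union_le _ _
    _ ≤ t₂ + t₁ * 2 := by
        refine add_le_add (le_of_eq ht₂) ?_
        have h := ncard_biUnion_le hfin1
          (fun μ => {lam : ℝ | lam ^ 2 + (-(μ + r₂)) * lam + (μ * r₂ - (n₂ : ℝ) * μ ^ 2) = 0})
          (fun μ => quad_ncard (-(μ + r₂)) (μ * r₂ - (n₂ : ℝ) * μ ^ 2))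
        rw [ht₁] at h
        exact h
    _ = 2 * t₁ + t₂ := by ring
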